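/- The set of sign vectors of a real subspace is closed under composition: for x, y ∈ V ⊆ R^n, the sign vector σ defined by σ_i = sign(x_i) if x_i ≠ 0 and σ_i = sign(y_i) otherwise, belongs to sign(V). Specifically, σ = sign(x + εy) for all sufficiently small ε > 0. -/

import Mathlib

open scoped Classical

/-- The set of sign vectors of a set of real vectors (sign applied componentwise). -/
def signSet {n : ℕ} (S : Set (Fin n → ℝ)) : Set (Fin n → SignType) :=
  {σ | ∃ x ∈ S, ∀ i, σ i = SignType.sign (x i)}

lemma sign_add_of_abs_lt {a b : ℝ} (h : |b| < |a|) :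
    SignType.sign (a + b) = SignType.sign a := by
  rcases lt_trichotomy a 0 with ha | ha | ha
  · have hb := (abs_lt.mp h).2
    rw [abs_of_neg ha] at hb
    have : a + b < 0 := by linarith
    rw [sign_neg ha, sign_neg this]
  · simp [ha] at h
    exact absurd h (abs_nonneg b).not_gt
  · have hb := (abs_lt.mp h).1
    rw [abs_of_pos ha] at hb
    have : 0 < a + b := by linarith
    rw [sign_pos ha, sign_pos this]

theorem signSet_composition {n : ℕ} (V : Submodule ℝ (Fin n → ℝ)) (x y : Fin n → ℝ)
    (hx : x ∈ V) (hy : y ∈ V) :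
    (fun i => if x i ≠ 0 then SignType.sign (x i) else SignType.sign (y i)) ∈
        signSet (V : Set (Fin n → ℝ)) ∧
      ∃ ε₀ > (0 : ℝ), ∀ ε : ℝ, 0 < ε → ε < ε₀ → ∀ i,
        (if x i ≠ 0 then SignType.sign (x i) else SignType.sign (y i)) =
          SignType.sign (x i + ε * y i) := by
  set f : Fin n → ℝ := fun i => if x i = 0 then 1 else |x i| / (|y i| + 1) with hf
  have hfpos : ∀ i, 0 < f i := by
    intro i
    by_cases h : x i = 0
    · simp [hf, h]
    · simp only [hf, if_neg h]
      exact div_pos (abs_pos.mpr h) (by positivity)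
  set s : Finset ℝ := insert (1 : ℝ) (Finset.univ.image f) with hs
  have hsne : s.Nonempty := ⟨1, by simp [hs]⟩
  set ε₀ : ℝ := s.min' hsne with hε₀
  have hε₀pos : 0 < ε₀ := by
    have hmem : ε₀ ∈ s := s.min'_mem hsne
    rw [hs, Finset.mem_insert] at hmem
    rcases hmem with h | h
    · exact h ▸ one_pos
    · obtain ⟨i, _, hi⟩ := Finset.mem_image.mp h
      exact hi ▸ hfpos i
  have key : ∀ ε : ℝ, 0 < ε → ε < ε₀ → ∀ i,
      (if x i ≠ 0 then SignType.sign (x i) else SignType.sign (y i)) =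
        SignType.sign (x i + ε * y i) := by
    intro ε hε hεlt i
    by_cases h : x i = 0
    · simp only [h, ne_eq, not_true_eq_false, if_false]
      rw [zero_add, sign_mul, sign_pos hε, one_mul]
    · have hεf : ε < f i := lt_of_lt_of_le hεlt
        (Finset.min'_le _ _ (by simp [hs]))
      rw [hf] at hεf
      simp only [if_neg h] at hεf
      have habs : |ε * y i| < |x i| := by
        rw [abs_mul, abs_of_pos hε]
        have h1 : 0 < |y i| + 1 := by positivity
        have := (mul_lt_mul_iff_of_pos_right h1).mpr hεf
        rw [div_mul_cancel₀ _ h1.ne'] at this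
        nlinarith [abs_nonneg (y i)]
      simp only [ne_eq, h, not_false_eq_true, if_true]
      exact (sign_add_of_abs_lt habs).symm
  refine ⟨?_, ε₀, hε₀pos, key⟩
  refine ⟨x + (ε₀ / 2) • y, V.add_mem hx (V.smul_mem _ hy), ?_⟩
  intro i
  have := key (ε₀ / 2) (by linarith) (by linarith) i
  simpa using this
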